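/- Let q₀ ∈ (1,2) be the unique real number with Γ((q₀+1)/2) = √π/2. Then for 1 ≤ q < q₀ one has 2^{1/2 - 1/q} ≤ √2 (Γ((1+q)/2)/√π)^{1/q}, with equality at q = q₀; i.e., the two formulas for the optimal real Khinchin constant A_q agree at q₀ and the piecewise definition is the minimum of the two expressions on [1,2]. -/

import Mathlib

theorem stmt7 (q₀ : ℝ) (hq₀ : q₀ ∈ Set.Ioo (1:ℝ) 2)
    (hΓ : Real.Gamma ((q₀ + 1) / 2) = Real.sqrt Real.pi / 2) :
    (∀ q : ℝ, 1 ≤ q → q < q₀ →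
        (2:ℝ) ^ (1/2 - 1/q) ≤
          Real.sqrt 2 * (Real.Gamma ((1 + q) / 2) / Real.sqrt Real.pi) ^ (1/q)) ∧
    (2:ℝ) ^ (1/2 - 1/q₀) =
      Real.sqrt 2 * (Real.Gamma ((1 + q₀) / 2) / Real.sqrt Real.pi) ^ (1/q₀) := by
  obtain ⟨hq₀1, hq₀2⟩ := hq₀
  have hπ : 0 < Real.sqrt Real.pi := Real.sqrt_pos.mpr Real.pi_pos
  have hΓ32 : Real.Gamma (3/2) = Real.sqrt Real.pi / 2 := by
    have h := Real.Gamma_add_one (s := (1:ℝ)/2) (by norm_num)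
    rw [Real.Gamma_one_half_eq] at h
    rw [show (3:ℝ)/2 = 1/2 + 1 by norm_num, h]
    ring
  have h2 : ∀ q : ℝ, Real.sqrt 2 * ((1:ℝ)/2) ^ (1/q) = (2:ℝ) ^ (1/2 - 1/q) := by
    intro q
    rw [show (1:ℝ)/2 = (2:ℝ)⁻¹ by norm_num, Real.inv_rpow (by norm_num),
      ← Real.rpow_neg (by norm_num), Real.sqrt_eq_rpow,
      ← Real.rpow_add (by norm_num)]
    ring_nf
  -- key: Gamma ((1+q)/2) ≥ √π/2 for 1 ≤ q ≤ q₀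
  have key : ∀ q : ℝ, 1 ≤ q → q ≤ q₀ → Real.sqrt Real.pi / 2 ≤ Real.Gamma ((1 + q) / 2) := by
    intro q hq1 hq2
    rcases eq_or_lt_of_le hq2 with rfl | hlt
    · rw [show (1+q)/2 = (q+1)/2 by ring, hΓ]
    · set x : ℝ := (1 + q) / 2 with hxdef
      have hx1 : (1:ℝ) ≤ x := by rw [hxdef]; linarith
      have hx0 : x < (q₀ + 1)/2 := by rw [hxdef]; linarith
      have hx32 : (q₀ + 1)/2 < 3/2 := by linarith
      set a : ℝ := (3/2 - (q₀ + 1)/2) / (3/2 - x) with hadef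
      set b : ℝ := ((q₀ + 1)/2 - x) / (3/2 - x) with hbdef
      have hden : (0:ℝ) < 3/2 - x := by linarith
      have ha : 0 < a := div_pos (by linarith) hden
      have hb : 0 < b := div_pos (by linarith) hden
      have hab : a + b = 1 := by
        rw [hadef, hbdef, ← add_div, div_eq_one_iff_eq hden.ne']; ring
      have hcomb : a * x + b * (3/2 : ℝ) = (q₀ + 1)/2 := by
        rw [hadef, hbdef, div_mul_eq_mul_div, div_mul_eq_mul_div, ← add_div,
          div_eq_iff hden.ne']
        ring
      have hconv := Real.convexOn_Gamma.2 (show x ∈ Set.Ioi 0 by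
          simp only [Set.mem_Ioi]; linarith)
        (show (3/2:ℝ) ∈ Set.Ioi 0 by norm_num) ha.le hb.le hab
      simp only [smul_eq_mul] at hconv
      rw [hcomb, hΓ, hΓ32] at hconv
      have hbs : b * (Real.sqrt Real.pi / 2)
          = Real.sqrt Real.pi / 2 - a * (Real.sqrt Real.pi / 2) := by
        rw [show b = 1 - a by linarith]; ring
      have haG : a * (Real.sqrt Real.pi / 2) ≤ a * Real.Gamma x := by linarith
      exact le_of_mul_le_mul_left haG ha
  constructor
  · intro q hq1 hq2
    have hq0 : (0:ℝ) < q := by linarith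
    have hG := key q hq1 hq2.le
    have h12 : (1:ℝ)/2 ≤ Real.Gamma ((1 + q) / 2) / Real.sqrt Real.pi := by
      rw [le_div_iff₀ hπ]; linarith
    have hmono : ((1:ℝ)/2) ^ (1/q) ≤ (Real.Gamma ((1 + q) / 2) / Real.sqrt Real.pi) ^ (1/q) :=
      Real.rpow_le_rpow (by norm_num) h12 (by positivity)
    calc (2:ℝ) ^ (1/2 - 1/q) = Real.sqrt 2 * ((1:ℝ)/2) ^ (1/q) := (h2 q).symm
      _ ≤ Real.sqrt 2 * (Real.Gamma ((1 + q) / 2) / Real.sqrt Real.pi) ^ (1/q) :=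
          mul_le_mul_of_nonneg_left hmono (Real.sqrt_nonneg 2)
  · have hGq : Real.Gamma ((1 + q₀) / 2) / Real.sqrt Real.pi = (1:ℝ)/2 := by
      rw [show (1+q₀)/2 = (q₀+1)/2 by ring, hΓ, div_right_comm, div_self hπ.ne']
    rw [hGq, h2 q₀]
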